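/- The elements J_i := (T_{i-1}^{-1} T_{i-2}^{-1} ⋯ T_1^{-1}) · (T_0 T_1 ⋯ T_n) · (T_{n-1} T_{n-2} ⋯ T_i) for i = 1, …, n pairwise commute: J_i J_j = J_j J_i for all 1 ≤ i, j ≤ n. -/
import Mathlib

/-- The ordered product `T a * T (a+1) * ⋯ * T b` (equal to `1` when `b < a`). -/
def upProd {G : Type*} [Monoid G] (T : ℕ → G) (a b : ℕ) : G :=
  ((List.range (b + 1 - a)).map fun k => T (a + k)).prod

/-- The ordered product `T b * T (b-1) * ⋯ * T a` (equal to `1` when `b < a`). -/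
def downProd {G : Type*} [Monoid G] (T : ℕ → G) (b a : ℕ) : G :=
  ((List.range (b + 1 - a)).map fun k => T (b - k)).prod

section ProdLemmas
variable {G : Type*} [Monoid G] (T : ℕ → G)

theorem upProd_of_lt {a b : ℕ} (h : b < a) : upProd T a b = 1 := by
  have h0 : b + 1 - a = 0 := by omega
  simp [upProd, h0]

theorem upProd_self (a : ℕ) : upProd T a a = T a := by
  simp [upProd, show List.range 1 = [0] from rfl]

theorem upProd_cons {a b : ℕ} (h : a ≤ b) : upProd T a b = T a * upProd T (a + 1) b := by
  have h1 : b + 1 - a = (b + 1 - (a + 1)) + 1 := by omega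
  rw [upProd, h1, List.range_succ_eq_map]
  simp only [List.map_cons, List.prod_cons, List.map_map, Nat.add_zero]
  rw [upProd]
  refine congrArg _ (congrArg List.prod (List.map_congr_left fun k _ => ?_))
  simp only [Function.comp_apply]
  congr 1
  omega

theorem upProd_concat {a b : ℕ} (h : a ≤ b + 1) : upProd T a (b + 1) = upProd T a b * T (b + 1) := by
  have h1 : b + 1 + 1 - a = (b + 1 - a) + 1 := by omega
  rw [upProd, h1, List.range_succ]
  simp only [List.map_append, List.prod_append, List.map_cons, List.map_nil, List.prod_cons,
    List.prod_nil, mul_one]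
  rw [upProd]
  congr 2
  omega

theorem upProd_split {a b c : ℕ} (h1 : a ≤ b + 1) (h2 : b ≤ c) :
    upProd T a c = upProd T a b * upProd T (b + 1) c := by
  induction c, h2 using Nat.le_induction with
  | base => rw [upProd_of_lt T (Nat.lt_succ_self b), mul_one]
  | succ c hbc ih =>
      rw [upProd_concat T (by omega), ih, upProd_concat T (by omega), mul_assoc]

theorem downProd_of_lt {a b : ℕ} (h : b < a) : downProd T b a = 1 := by
  have h0 : b + 1 - a = 0 := by omega
  simp [downProd, h0]

theorem downProd_self (a : ℕ) : downProd T a a = T a := by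
  simp [downProd, show List.range 1 = [0] from rfl]

theorem downProd_cons {a b : ℕ} (ha : 1 ≤ a) (h : a ≤ b) :
    downProd T b a = T b * downProd T (b - 1) a := by
  have h1 : b + 1 - a = (b - 1 + 1 - a) + 1 := by omega
  rw [downProd, h1, List.range_succ_eq_map]
  simp only [List.map_cons, List.prod_cons, List.map_map, Nat.sub_zero]
  rw [downProd]
  refine congrArg _ (congrArg List.prod (List.map_congr_left fun k _ => ?_))
  simp only [Function.comp_apply]
  congr 1
  omega

theorem downProd_concat {a b : ℕ} (h : a ≤ b) :
    downProd T b a = downProd T b (a + 1) * T a := by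
  have h1 : b + 1 - a = (b + 1 - (a + 1)) + 1 := by omega
  rw [downProd, h1, List.range_succ]
  simp only [List.map_append, List.prod_append, List.map_cons, List.map_nil, List.prod_cons,
    List.prod_nil, mul_one]
  rw [downProd]
  congr 2
  omega

theorem downProd_split {a b c : ℕ} (h1 : a ≤ b + 1) (h2 : b ≤ c) :
    downProd T c a = downProd T c (b + 1) * downProd T b a := by
  obtain ⟨k, hk⟩ : ∃ k, b + 1 - a = k := ⟨_, rfl⟩
  induction k generalizing a with
  | zero =>
      have : a = b + 1 := by omega
      subst this
      rw [downProd_of_lt T (Nat.lt_succ_self b), mul_one]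
  | succ k ih =>
      have hab : a ≤ b := by omega
      rw [downProd_concat T (show a ≤ c by omega), ih (a := a + 1) (by omega) (by omega),
        downProd_concat T hab, mul_assoc]

theorem commute_upProd {c : G} {a b : ℕ} (h : ∀ k, a ≤ k → k ≤ b → Commute c (T k)) :
    Commute c (upProd T a b) := by
  apply Commute.list_prod_right
  intro x hx
  simp only [List.mem_map, List.mem_range] at hx
  obtain ⟨k, hk, rfl⟩ := hx
  exact h _ (Nat.le_add_right a k) (by omega)

theorem commute_downProd {c : G} {a b : ℕ} (h : ∀ k, a ≤ k → k ≤ b → Commute c (T k)) :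
    Commute c (downProd T b a) := by
  apply Commute.list_prod_right
  intro x hx
  simp only [List.mem_map, List.mem_range] at hx
  obtain ⟨k, hk, rfl⟩ := hx
  exact h _ (by omega) (by omega)

end ProdLemmas

section GroupIds
variable {G : Type*} [Group G]

theorem braid_inv1 {s t : G} (hb : t * s * t = s * t * s) : t * s * t⁻¹ = s⁻¹ * t * s := by
  calc t * s * t⁻¹ = s⁻¹ * (s * t * s) * t⁻¹ := by group
    _ = s⁻¹ * (t * s * t) * t⁻¹ := by rw [← hb]
    _ = s⁻¹ * t * s := by group

theorem braid_inv2 {s t : G} (hb : t * s * t = s * t * s) :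
    t⁻¹ * s⁻¹ * t = s * t⁻¹ * s⁻¹ := by
  have hbinv : s⁻¹ * t⁻¹ * s⁻¹ = t⁻¹ * s⁻¹ * t⁻¹ := by
    calc s⁻¹ * t⁻¹ * s⁻¹ = (s * t * s)⁻¹ := by group
      _ = (t * s * t)⁻¹ := by rw [← hb]
      _ = t⁻¹ * s⁻¹ * t⁻¹ := by group
  calc t⁻¹ * s⁻¹ * t = s * (s⁻¹ * t⁻¹ * s⁻¹) * t := by group
    _ = s * (t⁻¹ * s⁻¹ * t⁻¹) * t := by rw [hbinv]
    _ = s * t⁻¹ * s⁻¹ := by group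

/-- Step lemma for propagating the type-`C` relation upward along `X`. -/
theorem c_step_up {a t s : G} (hb : t * s * t = s * t * s) (hc : a * s = s * a)
    (hr : a * t * a * t = t * a * t * a) :
    t⁻¹ * a * t * s * (t⁻¹ * a * t) * s = s * (t⁻¹ * a * t) * s * (t⁻¹ * a * t) := by
  have h1 : t * s * t⁻¹ = s⁻¹ * t * s := braid_inv1 hb
  have h2 : t⁻¹ * s⁻¹ * t = s * t⁻¹ * s⁻¹ := braid_inv2 hb
  have hc2 : a * s⁻¹ = s⁻¹ * a := by
    calc a * s⁻¹ = s⁻¹ * (s * a) * s⁻¹ := by group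
      _ = s⁻¹ * (a * s) * s⁻¹ := by rw [← hc]
      _ = s⁻¹ * a := by group
  calc t⁻¹ * a * t * s * (t⁻¹ * a * t) * s
      = t⁻¹ * a * (t * s * t⁻¹) * (a * (t * s)) := by group
    _ = t⁻¹ * a * (s⁻¹ * t * s) * (a * (t * s)) := by rw [h1]
    _ = t⁻¹ * (a * s⁻¹) * (t * ((s * a) * (t * s))) := by group
    _ = t⁻¹ * (s⁻¹ * a) * (t * ((a * s) * (t * s))) := by rw [hc2, ← hc]
    _ = t⁻¹ * s⁻¹ * (a * t * a) * (s * t * s) := by group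
    _ = t⁻¹ * s⁻¹ * (a * t * a) * (t * s * t) := by rw [← hb]
    _ = t⁻¹ * s⁻¹ * (a * t * a * t) * (s * t) := by group
    _ = t⁻¹ * s⁻¹ * (t * a * t * a) * (s * t) := by rw [hr]
    _ = (t⁻¹ * s⁻¹ * t) * (a * t * ((a * s) * t)) := by group
    _ = (s * t⁻¹ * s⁻¹) * (a * t * ((s * a) * t)) := by rw [h2, hc]
    _ = s * t⁻¹ * (s⁻¹ * a) * (t * s * (a * t)) := by group
    _ = s * t⁻¹ * (a * s⁻¹) * (t * s * (a * t)) := by rw [← hc2]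
    _ = s * t⁻¹ * a * (s⁻¹ * t * s) * (a * t) := by group
    _ = s * t⁻¹ * a * (t * s * t⁻¹) * (a * t) := by rw [← h1]
    _ = s * (t⁻¹ * a * t) * s * (t⁻¹ * a * t) := by group

/-- Step lemma for propagating the type-`C` relation downward along `Y`. -/
theorem c_step_down {y t s : G} (hb : s * t * s = t * s * t) (hc : y * s = s * y)
    (hr : y * t * y * t = t * y * t * y) :
    t * y * t * s * (t * y * t) * s = s * (t * y * t) * s * (t * y * t) := by
  calc t * y * t * s * (t * y * t) * s
      = t * y * (t * s * t) * (y * (t * s)) := by group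
    _ = t * y * (s * t * s) * (y * (t * s)) := by rw [← hb]
    _ = t * (y * s) * (t * ((s * y) * (t * s))) := by group
    _ = t * (s * y) * (t * ((y * s) * (t * s))) := by rw [hc]
    _ = t * s * (y * t * y) * (s * t * s) := by group
    _ = t * s * (y * t * y) * (t * s * t) := by rw [hb]
    _ = t * s * (y * t * y * t) * (s * t) := by group
    _ = t * s * (t * y * t * y) * (s * t) := by rw [hr]
    _ = (t * s * t) * (y * t * ((y * s) * t)) := by group
    _ = (s * t * s) * (y * t * ((s * y) * t)) := by rw [← hb, hc]
    _ = s * t * (s * y) * (t * s * (y * t)) := by group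
    _ = s * t * (y * s) * (t * s * (y * t)) := by rw [← hc]
    _ = s * t * y * (s * t * s) * (y * t) := by group
    _ = s * t * y * (t * s * t) * (y * t) := by rw [hb]
    _ = s * (t * y * t) * s * (t * y * t) := by group

/-- The key commutation `J_i J_{i+1} = J_{i+1} J_i`, in abstract form:
`J_i = x * (t*y*t)` and `J_{i+1} = (t⁻¹*x*t) * y`. -/
theorem adj_commute {x y t : G} (hxy : x * y = y * x)
    (hR1 : x * t * x * t = t * x * t * x) (hR2 : y * t * y * t = t * y * t * y) :
    x * (t * y * t) * (t⁻¹ * x * t * y) = t⁻¹ * x * t * y * (x * (t * y * t)) := by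
  symm
  calc t⁻¹ * x * t * y * (x * (t * y * t))
      = t⁻¹ * x * t * (y * x) * (t * y * t) := by group
    _ = t⁻¹ * x * t * (x * y) * (t * y * t) := by rw [← hxy]
    _ = t⁻¹ * (x * t * x) * (y * t * y * t) := by group
    _ = t⁻¹ * (x * t * x) * (t * y * t * y) := by rw [hR2]
    _ = t⁻¹ * (x * t * x * t) * (y * t * y) := by group
    _ = t⁻¹ * (t * x * t * x) * (y * t * y) := by rw [hR1]
    _ = x * t * (x * y) * (t * y) := by group
    _ = x * t * (y * x) * (t * y) := by rw [hxy]
    _ = x * (t * y * t) * (t⁻¹ * x * t * y) := by group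

end GroupIds

section Elements
variable {G : Type*} [Group G] (T : ℕ → G) (n : ℕ)

/-- `X_i = T_{i-1}⁻¹ ⋯ T_1⁻¹ · T_0 T_1 ⋯ T_{i-1}`. -/
def Xel (i : ℕ) : G := downProd (fun k => (T k)⁻¹) (i - 1) 1 * upProd T 0 (i - 1)

/-- `Y_i = T_i ⋯ T_n · T_{n-1} ⋯ T_i`. -/
def Yel (i : ℕ) : G := upProd T i n * downProd T (n - 1) i

/-- `J_i`. -/
def Jel (i : ℕ) : G :=
  downProd (fun k => (T k)⁻¹) (i - 1) 1 * upProd T 0 n * downProd T (n - 1) i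

theorem Xel_one : Xel T 1 = T 0 := by
  simp [Xel, downProd_of_lt _ (show (0:ℕ) < 1 by omega), upProd_self]

theorem Yel_top (hn : 1 ≤ n) : Yel T n n = T n := by
  simp [Yel, downProd_of_lt _ (show n - 1 < n by omega), upProd_self]

theorem Xel_succ {i : ℕ} (hi : 1 ≤ i) : Xel T (i + 1) = (T i)⁻¹ * Xel T i * T i := by
  have e1 : downProd (fun k => (T k)⁻¹) (i + 1 - 1) 1
      = (T i)⁻¹ * downProd (fun k => (T k)⁻¹) (i - 1) 1 := by
    have := downProd_cons (fun k => (T k)⁻¹) (le_refl 1) hi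
    simpa using this
  have e2 : upProd T 0 (i + 1 - 1) = upProd T 0 (i - 1) * T i := by
    have h1 : i + 1 - 1 = (i - 1) + 1 := by omega
    rw [h1, upProd_concat T (by omega), show i - 1 + 1 = i by omega]
  rw [Xel, e1, e2, Xel]
  group

theorem Yel_succ {i : ℕ} (hi : 1 ≤ i) (hi2 : i ≤ n - 1) (hn : 1 ≤ n) :
    Yel T n i = T i * Yel T n (i + 1) * T i := by
  have e1 : upProd T i n = T i * upProd T (i + 1) n := upProd_cons T (by omega)
  have e2 : downProd T (n - 1) i = downProd T (n - 1) (i + 1) * T i :=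
    downProd_concat T (by omega)
  rw [Yel, e1, e2, Yel]
  group

theorem Jel_eq_XY {i : ℕ} (hi : 1 ≤ i) (hin : i ≤ n) :
    Jel T n i = Xel T i * Yel T n i := by
  have e : upProd T 0 n = upProd T 0 (i - 1) * upProd T i n := by
    have h := upProd_split T (a := 0) (b := i - 1) (c := n) (by omega) (by omega)
    rw [show i - 1 + 1 = i by omega] at h
    exact h
  rw [Jel, Xel, Yel, e]
  group

theorem Jel_succ {i : ℕ} (hi : 1 ≤ i) (hi2 : i ≤ n - 1) (hn : 1 ≤ n) :
    Jel T n (i + 1) = (T i)⁻¹ * Jel T n i * (T i)⁻¹ := by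
  have e1 : downProd (fun k => (T k)⁻¹) (i + 1 - 1) 1
      = (T i)⁻¹ * downProd (fun k => (T k)⁻¹) (i - 1) 1 := by
    have := downProd_cons (fun k => (T k)⁻¹) (le_refl 1) hi
    simpa using this
  have e2 : downProd T (n - 1) i = downProd T (n - 1) (i + 1) * T i :=
    downProd_concat T (by omega)
  have e2' : downProd T (n - 1) (i + 1) = downProd T (n - 1) i * (T i)⁻¹ := by
    rw [e2]; group
  rw [Jel, Jel, e1, e2']
  group

end Elements

section Context
variable {G : Type*} [Group G] {T : ℕ → G} {n : ℕ}

/-- `T k` commutes with `X_i` when `k ≥ i + 1` (and `k ≤ n`). -/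
theorem commute_Xel_T (hcomm : ∀ i j, i ≤ n → j ≤ n → i + 2 ≤ j → T i * T j = T j * T i)
    {i k : ℕ} (hi : 1 ≤ i) (hik : i + 1 ≤ k) (hkn : k ≤ n) : Commute (Xel T i) (T k) := by
  have base : ∀ m, 1 ≤ m → m ≤ i - 1 → Commute (T k) ((fun j => (T j)⁻¹) m) := by
    intro m _ hm
    exact (Commute.symm (hcomm m k (by omega) hkn (by omega))).inv_right
  have base2 : ∀ m, 0 ≤ m → m ≤ i - 1 → Commute (T k) (T m) := by
    intro m _ hm
    exact Commute.symm (hcomm m k (by omega) hkn (by omega))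
  exact (Commute.mul_right (commute_downProd _ base) (commute_upProd _ base2)).symm

/-- `T m` commutes with `Y_j` when `m + 2 ≤ j` (and `j ≤ n`). -/
theorem commute_T_Yel (hcomm : ∀ i j, i ≤ n → j ≤ n → i + 2 ≤ j → T i * T j = T j * T i)
    {m j : ℕ} (hmj : m + 2 ≤ j) (hjn : j ≤ n) : Commute (T m) (Yel T n j) := by
  have base : ∀ l, j ≤ l → l ≤ n → Commute (T m) (T l) := by
    intro l hl hln
    exact hcomm m l (by omega) hln (by omega)
  refine Commute.mul_right (commute_upProd _ base) (commute_downProd _ ?_)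
  intro l hl hln
  exact base l hl (by omega)

/-- `X_i` commutes with `Y_j` when `j ≥ i + 1`. -/
theorem commute_Xel_Yel (hcomm : ∀ i j, i ≤ n → j ≤ n → i + 2 ≤ j → T i * T j = T j * T i)
    {i j : ℕ} (hi : 1 ≤ i) (hij : i + 1 ≤ j) (hjn : j ≤ n) : Commute (Xel T i) (Yel T n j) := by
  have base : ∀ m, 1 ≤ m → m ≤ i - 1 → Commute (Yel T n j) ((fun l => (T l)⁻¹) m) := by
    intro m _ hm
    exact (commute_T_Yel hcomm (by omega) hjn (m := m)).symm.inv_right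
  have base2 : ∀ m, 0 ≤ m → m ≤ i - 1 → Commute (Yel T n j) (T m) := by
    intro m _ hm
    exact (commute_T_Yel hcomm (by omega) hjn (m := m)).symm
  exact (Commute.mul_right (commute_downProd _ base) (commute_upProd _ base2)).symm

/-- Shift lemma: `T k · (T_a ⋯ T_n) = (T_a ⋯ T_n) · T_{k-1}` for `a ≤ k - 1`, `2 ≤ k ≤ n-1`. -/
theorem shift_up
    (hbraid : ∀ i, 1 ≤ i → i ≤ n - 2 → T i * T (i + 1) * T i = T (i + 1) * T i * T (i + 1))
    (hcomm : ∀ i j, i ≤ n → j ≤ n → i + 2 ≤ j → T i * T j = T j * T i)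
    {a k : ℕ} (hk2 : 2 ≤ k) (hkn : k ≤ n - 1) (hak : a ≤ k - 1) (hn : 2 ≤ n) :
    T k * upProd T a n = upProd T a n * T (k - 1) := by
  have e1 : upProd T a n = upProd T a (k - 2) * upProd T (k - 1) n := by
    have h := upProd_split T (a := a) (b := k - 2) (c := n) (by omega) (by omega)
    rw [show k - 2 + 1 = k - 1 by omega] at h
    exact h
  have e2 : upProd T (k - 1) n = T (k - 1) * upProd T k n := by
    have h := upProd_cons T (a := k - 1) (b := n) (by omega)
    rw [show k - 1 + 1 = k by omega] at h
    exact h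
  have e3 : upProd T k n = T k * upProd T (k + 1) n := upProd_cons T (by omega)
  have c1 : Commute (T k) (upProd T a (k - 2)) := by
    refine commute_upProd _ fun m _ hm => ((hcomm m k (by omega) (by omega) (by omega)).symm)
  have c2 : Commute (T (k - 1)) (upProd T (k + 1) n) := by
    refine commute_upProd _ fun m hm hm' => (hcomm (k - 1) m (by omega) (by omega) (by omega))
  have hbk : T (k - 1) * T k * T (k - 1) = T k * T (k - 1) * T k := by
    have h := hbraid (k - 1) (by omega) (by omega)
    rw [show k - 1 + 1 = k by omega] at h
    exact h
  rw [e1, e2, e3]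
  calc T k * (upProd T a (k - 2) * (T (k - 1) * (T k * upProd T (k + 1) n)))
      = (T k * upProd T a (k - 2)) * (T (k - 1) * T k * upProd T (k + 1) n) := by group
    _ = (upProd T a (k - 2) * T k) * (T (k - 1) * T k * upProd T (k + 1) n) := by rw [c1.eq]
    _ = upProd T a (k - 2) * (T k * T (k - 1) * T k) * upProd T (k + 1) n := by group
    _ = upProd T a (k - 2) * (T (k - 1) * T k * T (k - 1)) * upProd T (k + 1) n := by rw [← hbk]
    _ = upProd T a (k - 2) * (T (k - 1) * (T k * (T (k - 1) * upProd T (k + 1) n))) := by group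
    _ = upProd T a (k - 2) * (T (k - 1) * (T k * (upProd T (k + 1) n * T (k - 1)))) := by
        rw [c2.eq]
    _ = upProd T a (k - 2) * (T (k - 1) * (T k * upProd T (k + 1) n)) * T (k - 1) := by group

/-- Shift lemma: `T_{k-1} · (T_{n-1} ⋯ T_a) = (T_{n-1} ⋯ T_a) · T_k` for
`1 ≤ a ≤ k - 1`, `k ≤ n - 1`. -/
theorem shift_down
    (hbraid : ∀ i, 1 ≤ i → i ≤ n - 2 → T i * T (i + 1) * T i = T (i + 1) * T i * T (i + 1))
    (hcomm : ∀ i j, i ≤ n → j ≤ n → i + 2 ≤ j → T i * T j = T j * T i)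
    {a k : ℕ} (ha : 1 ≤ a) (hak : a + 1 ≤ k) (hkn : k ≤ n - 1) (hn : 2 ≤ n) :
    T (k - 1) * downProd T (n - 1) a = downProd T (n - 1) a * T k := by
  have e1 : downProd T (n - 1) a = downProd T (n - 1) (k + 1) * downProd T k a :=
    downProd_split T (by omega) (by omega)
  have e2 : downProd T k a = T k * downProd T (k - 1) a := downProd_cons T ha (by omega)
  have e3 : downProd T (k - 1) a = T (k - 1) * downProd T (k - 2) a := by
    have h := downProd_cons T (b := k - 1) ha (by omega)
    rw [show k - 1 - 1 = k - 2 by omega] at h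
    exact h
  have c1 : Commute (T (k - 1)) (downProd T (n - 1) (k + 1)) := by
    refine commute_downProd _ fun m hm hm' => (hcomm (k - 1) m (by omega) (by omega) (by omega))
  have c2 : Commute (T k) (downProd T (k - 2) a) := by
    refine commute_downProd _ fun m _ hm => ((hcomm m k (by omega) (by omega) (by omega)).symm)
  have hbk : T (k - 1) * T k * T (k - 1) = T k * T (k - 1) * T k := by
    have h := hbraid (k - 1) (by omega) (by omega)
    rw [show k - 1 + 1 = k by omega] at h
    exact h
  rw [e1, e2, e3]
  calc T (k - 1) * (downProd T (n - 1) (k + 1) * (T k * (T (k - 1) * downProd T (k - 2) a)))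
      = (T (k - 1) * downProd T (n - 1) (k + 1)) * (T k * T (k - 1) * downProd T (k - 2) a) := by
        group
    _ = (downProd T (n - 1) (k + 1) * T (k - 1)) * (T k * T (k - 1) * downProd T (k - 2) a) := by
        rw [c1.eq]
    _ = downProd T (n - 1) (k + 1) * (T (k - 1) * T k * T (k - 1)) * downProd T (k - 2) a := by
        group
    _ = downProd T (n - 1) (k + 1) * (T k * T (k - 1) * T k) * downProd T (k - 2) a := by
        rw [hbk]
    _ = downProd T (n - 1) (k + 1) * (T k * (T (k - 1) * (T k * downProd T (k - 2) a))) := by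
        group
    _ = downProd T (n - 1) (k + 1) * (T k * (T (k - 1) * (downProd T (k - 2) a * T k))) := by
        rw [c2.eq]
    _ = downProd T (n - 1) (k + 1) * (T k * (T (k - 1) * downProd T (k - 2) a)) * T k := by
        group

end Context

section Main
variable {G : Type*} [Group G] {T : ℕ → G} {n : ℕ}

/-- The type-`C` relation between `X_i` and `T_i`. -/
theorem Xel_Crel
    (hbraid : ∀ i, 1 ≤ i → i ≤ n - 2 → T i * T (i + 1) * T i = T (i + 1) * T i * T (i + 1))
    (hcomm : ∀ i j, i ≤ n → j ≤ n → i + 2 ≤ j → T i * T j = T j * T i)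
    (hC0 : T 1 * T 0 * T 1 * T 0 = T 0 * T 1 * T 0 * T 1) (hn : 2 ≤ n) :
    ∀ i, 1 ≤ i → i ≤ n - 1 →
      Xel T i * T i * (Xel T i) * T i = T i * Xel T i * T i * Xel T i := by
  intro i
  induction i with
  | zero => omega
  | succ i ih =>
    intro _ hi2
    rcases Nat.eq_or_lt_of_le (show 1 ≤ i + 1 by omega) with h1 | h1
    · -- base case i + 1 = 1
      rw [show i = 0 by omega]
      rw [Xel_one]
      exact hC0.symm
    · -- inductive step, 1 ≤ i
      have hi : 1 ≤ i := by omega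
      have hr := ih hi (by omega)
      have hb : T i * T (i + 1) * T i = T (i + 1) * T i * T (i + 1) :=
        hbraid i hi (by omega)
      have hc : Xel T i * T (i + 1) = T (i + 1) * Xel T i :=
        (commute_Xel_T hcomm hi (by omega) (by omega)).eq
      have := c_step_up hb hc hr
      rw [Xel_succ T hi]
      calc (T i)⁻¹ * Xel T i * T i * T (i + 1) * ((T i)⁻¹ * Xel T i * T i) * T (i + 1)
          = T (i + 1) * ((T i)⁻¹ * Xel T i * T i) * T (i + 1) * ((T i)⁻¹ * Xel T i * T i) :=
            this
        _ = T (i + 1) * ((T i)⁻¹ * Xel T i * T i) * T (i + 1) * ((T i)⁻¹ * Xel T i * T i) :=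
            rfl

/-- The type-`C` relation between `Y_{i+1}` and `T_i`. -/
theorem Yel_Crel
    (hbraid : ∀ i, 1 ≤ i → i ≤ n - 2 → T i * T (i + 1) * T i = T (i + 1) * T i * T (i + 1))
    (hcomm : ∀ i j, i ≤ n → j ≤ n → i + 2 ≤ j → T i * T j = T j * T i)
    (hCn : T (n - 1) * T n * T (n - 1) * T n = T n * T (n - 1) * T n * T (n - 1)) (hn : 2 ≤ n) :
    ∀ i, 1 ≤ i → i ≤ n - 1 →
      Yel T n (i + 1) * T i * Yel T n (i + 1) * T i
        = T i * Yel T n (i + 1) * T i * Yel T n (i + 1) := by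
  have key : ∀ d i, 1 ≤ i → i ≤ n - 1 → n - 1 - i = d →
      Yel T n (i + 1) * T i * Yel T n (i + 1) * T i
        = T i * Yel T n (i + 1) * T i * Yel T n (i + 1) := by
    intro d
    induction d with
    | zero =>
      intro i hi1 hi2 hd
      have : i = n - 1 := by omega
      subst this
      rw [show n - 1 + 1 = n by omega, Yel_top T n (by omega)]
      exact hCn.symm
    | succ d ihd =>
      intro i hi1 hi2 hd
      have hi2' : i ≤ n - 2 := by omega
      have hr := ihd (i + 1) (by omega) (by omega) (by omega)
      have hb : T i * T (i + 1) * T i = T (i + 1) * T i * T (i + 1) := hbraid i hi1 hi2'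
      have hc : Yel T n (i + 2) * T i = T i * Yel T n (i + 2) :=
        (commute_T_Yel hcomm (by omega) (by omega)).symm.eq
      have step := c_step_down (y := Yel T n (i + 2)) (t := T (i + 1)) (s := T i) hb hc hr
      rw [Yel_succ T n (by omega) (by omega) (by omega) (i := i + 1),
        show i + 1 + 1 = i + 2 from rfl]
      exact step
  intro i hi1 hi2
  exact key (n - 1 - i) i hi1 hi2 rfl

/-- Adjacent `J`'s commute. -/
theorem Jel_adj_commute
    (hbraid : ∀ i, 1 ≤ i → i ≤ n - 2 → T i * T (i + 1) * T i = T (i + 1) * T i * T (i + 1))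
    (hcomm : ∀ i j, i ≤ n → j ≤ n → i + 2 ≤ j → T i * T j = T j * T i)
    (hC0 : T 1 * T 0 * T 1 * T 0 = T 0 * T 1 * T 0 * T 1)
    (hCn : T (n - 1) * T n * T (n - 1) * T n = T n * T (n - 1) * T n * T (n - 1)) (hn : 2 ≤ n)
    {i : ℕ} (hi1 : 1 ≤ i) (hi2 : i ≤ n - 1) :
    Jel T n i * Jel T n (i + 1) = Jel T n (i + 1) * Jel T n i := by
  have hJi : Jel T n i = Xel T i * (T i * Yel T n (i + 1) * T i) := by
    rw [Jel_eq_XY T n hi1 (by omega), Yel_succ T n hi1 hi2 (by omega)]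
  have hJi1 : Jel T n (i + 1) = (T i)⁻¹ * Xel T i * T i * Yel T n (i + 1) := by
    rw [Jel_eq_XY T n (by omega) (by omega), Xel_succ T hi1]
  have hxy : Xel T i * Yel T n (i + 1) = Yel T n (i + 1) * Xel T i :=
    (commute_Xel_Yel hcomm hi1 (by omega) (by omega)).eq
  have hR1 : Xel T i * T i * Xel T i * T i = T i * Xel T i * T i * Xel T i := by
    have := Xel_Crel hbraid hcomm hC0 hn i hi1 hi2
    calc Xel T i * T i * Xel T i * T i = Xel T i * T i * (Xel T i) * T i := by group
      _ = T i * Xel T i * T i * Xel T i := this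
  have hR2 := Yel_Crel hbraid hcomm hCn hn i hi1 hi2
  rw [hJi, hJi1]
  exact adj_commute hxy hR1 hR2

/-- `J_i` commutes with `T k` for `i + 1 ≤ k ≤ n - 1`. -/
theorem Jel_commute_T
    (hbraid : ∀ i, 1 ≤ i → i ≤ n - 2 → T i * T (i + 1) * T i = T (i + 1) * T i * T (i + 1))
    (hcomm : ∀ i j, i ≤ n → j ≤ n → i + 2 ≤ j → T i * T j = T j * T i)
    (hn : 2 ≤ n) {i k : ℕ} (hi : 1 ≤ i) (hik : i + 1 ≤ k) (hkn : k ≤ n - 1) :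
    T k * Jel T n i = Jel T n i * T k := by
  have cD : Commute (T k) (downProd (fun j => (T j)⁻¹) (i - 1) 1) := by
    refine commute_downProd _ fun m hm hm' => ?_
    exact (Commute.symm (hcomm m k (by omega) (by omega) (by omega))).inv_right
  have s1 : T k * upProd T 0 n = upProd T 0 n * T (k - 1) :=
    shift_up hbraid hcomm (by omega) hkn (by omega) hn
  have s2 : T (k - 1) * downProd T (n - 1) i = downProd T (n - 1) i * T k :=
    shift_down hbraid hcomm hi hik hkn hn
  rw [Jel]
  calc T k * (downProd (fun j => (T j)⁻¹) (i - 1) 1 * upProd T 0 n * downProd T (n - 1) i)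
      = (T k * downProd (fun j => (T j)⁻¹) (i - 1) 1) * (upProd T 0 n * downProd T (n - 1) i)
        := by group
    _ = (downProd (fun j => (T j)⁻¹) (i - 1) 1 * T k) * (upProd T 0 n * downProd T (n - 1) i)
        := by rw [cD.eq]
    _ = downProd (fun j => (T j)⁻¹) (i - 1) 1 * (T k * upProd T 0 n) * downProd T (n - 1) i
        := by group
    _ = downProd (fun j => (T j)⁻¹) (i - 1) 1 * (upProd T 0 n * T (k - 1)) * downProd T (n - 1) i
        := by rw [s1]
    _ = downProd (fun j => (T j)⁻¹) (i - 1) 1 * upProd T 0 n *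
          (T (k - 1) * downProd T (n - 1) i) := by group
    _ = downProd (fun j => (T j)⁻¹) (i - 1) 1 * upProd T 0 n *
          (downProd T (n - 1) i * T k) := by rw [s2]
    _ = downProd (fun j => (T j)⁻¹) (i - 1) 1 * upProd T 0 n * downProd T (n - 1) i * T k
        := by group

end Main


/-- The elements
`J_i = (T_{i-1}⁻¹ ⋯ T_1⁻¹) (T_0 T_1 ⋯ T_n) (T_{n-1} ⋯ T_i)` in the affine braid group
of type `C⁽¹⁾` pairwise commute. -/
theorem J_commute {G : Type*} [Group G] (n : ℕ) (hn : 2 ≤ n) (T : ℕ → G)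
    (hbraid : ∀ i, 1 ≤ i → i ≤ n - 2 →
      T i * T (i + 1) * T i = T (i + 1) * T i * T (i + 1))
    (hcomm : ∀ i j, i ≤ n → j ≤ n → i + 2 ≤ j → T i * T j = T j * T i)
    (hC0 : T 1 * T 0 * T 1 * T 0 = T 0 * T 1 * T 0 * T 1)
    (hCn : T (n - 1) * T n * T (n - 1) * T n = T n * T (n - 1) * T n * T (n - 1)) :
    ∀ i j, 1 ≤ i → i ≤ n → 1 ≤ j → j ≤ n →
      (downProd (fun k => (T k)⁻¹) (i - 1) 1 * upProd T 0 n * downProd T (n - 1) i) *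
        (downProd (fun k => (T k)⁻¹) (j - 1) 1 * upProd T 0 n * downProd T (n - 1) j) =
      (downProd (fun k => (T k)⁻¹) (j - 1) 1 * upProd T 0 n * downProd T (n - 1) j) *
        (downProd (fun k => (T k)⁻¹) (i - 1) 1 * upProd T 0 n * downProd T (n - 1) i) := by
  have key : ∀ j i, 1 ≤ i → i < j → j ≤ n → Jel T n i * Jel T n j = Jel T n j * Jel T n i := by
    intro j
    induction j with
    | zero => omega
    | succ m ih =>
      intro i hi1 hij hjn
      rcases Nat.lt_or_ge i m with hlt | hge
      · have hm1 : 1 ≤ m := by omega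
        have hrec : Jel T n (m + 1) = (T m)⁻¹ * Jel T n m * (T m)⁻¹ :=
          Jel_succ T n hm1 (by omega) (by omega)
        have hcom : T m * Jel T n i = Jel T n i * T m :=
          Jel_commute_T hbraid hcomm hn hi1 (by omega) (by omega)
        have hcom' : Jel T n i * (T m)⁻¹ = (T m)⁻¹ * Jel T n i := by
          calc Jel T n i * (T m)⁻¹ = (T m)⁻¹ * (T m * Jel T n i) * (T m)⁻¹ := by group
            _ = (T m)⁻¹ * (Jel T n i * T m) * (T m)⁻¹ := by rw [hcom]
            _ = (T m)⁻¹ * Jel T n i := by group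
        have hIH : Jel T n i * Jel T n m = Jel T n m * Jel T n i := ih i hi1 hlt (by omega)
        rw [hrec]
        calc Jel T n i * ((T m)⁻¹ * Jel T n m * (T m)⁻¹)
            = (Jel T n i * (T m)⁻¹) * Jel T n m * (T m)⁻¹ := by group
          _ = ((T m)⁻¹ * Jel T n i) * Jel T n m * (T m)⁻¹ := by rw [hcom']
          _ = (T m)⁻¹ * (Jel T n i * Jel T n m) * (T m)⁻¹ := by group
          _ = (T m)⁻¹ * (Jel T n m * Jel T n i) * (T m)⁻¹ := by rw [hIH]
          _ = (T m)⁻¹ * Jel T n m * (Jel T n i * (T m)⁻¹) := by group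
          _ = (T m)⁻¹ * Jel T n m * ((T m)⁻¹ * Jel T n i) := by rw [hcom']
          _ = (T m)⁻¹ * Jel T n m * (T m)⁻¹ * Jel T n i := by group
      · have : i = m := by omega
        subst this
        exact Jel_adj_commute hbraid hcomm hC0 hCn hn hi1 (by omega)
  intro i j hi1 hin hj1 hjn
  show Jel T n i * Jel T n j = Jel T n j * Jel T n i
  rcases lt_trichotomy i j with h | h | h
  · exact key j i hi1 h hjn
  · rw [h]
  · exact (key i j hj1 h hin).symm
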